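/- arXiv:1212.4632 — 4 statements merged into one kernel-verified Lean document; each statement's English description precedes it below -/
import Mathlib

section
/- Let 0 < s < 1 and 0 < δ ≤ 1. There exists a constant c_s > 0 (independent of δ and t) such that for every real t, ∫₀^δ (1 - cos(r t)) / r^{1+2s} dr ≥ c_s δ^{2-2s} min{ t², |t|^{2s} }. -/
open MeasureTheory

private lemma aux_rpow_int (s a : ℝ) (hs1 : s < 1) (ha : 0 < a) :
    ∫ r in Set.Ioc (0:ℝ) a, r ^ (1 - 2*s) = a ^ (2 - 2*s) / (2 - 2*s) := by
  rw [← intervalIntegral.integral_of_le ha.le,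
      integral_rpow (Or.inl (by linarith)),
      show (1 - 2*s) + 1 = 2 - 2*s by ring,
      Real.zero_rpow (by intro h; linarith : (2 - 2*s) ≠ 0), sub_zero]

private lemma aux_integrable (s a t : ℝ) (hs : 0 < s) (hs1 : s < 1) (ha : 0 < a) :
    IntegrableOn (fun r => (1 - Real.cos (r * t)) / r ^ (1 + 2*s)) (Set.Ioc (0:ℝ) a) := by
  have hint : IntegrableOn (fun r : ℝ => t^2/2 * r ^ (1 - 2*s)) (Set.Ioc (0:ℝ) a) :=
    ((intervalIntegral.intervalIntegrable_rpow' (by linarith)).1).const_mul _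
  refine MeasureTheory.Integrable.mono hint ?_ ?_
  · have hcont : ContinuousOn (fun r : ℝ => (1 - Real.cos (r * t)) / r ^ (1 + 2*s))
        (Set.Ioc (0:ℝ) a) := by
      apply ContinuousOn.div
      · exact Continuous.continuousOn (by continuity)
      · intro r hr
        exact (Real.continuousAt_rpow_const r _ (Or.inl hr.1.ne')).continuousWithinAt
      · intro r hr
        exact (Real.rpow_pos_of_pos hr.1 _).ne'
    exact hcont.aestronglyMeasurable measurableSet_Ioc
  · rw [ae_restrict_iff' measurableSet_Ioc]
    filter_upwards with r hr
    have hr0 : 0 < r := hr.1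
    have h1 : 0 ≤ 1 - Real.cos (r*t) := by nlinarith [Real.cos_le_one (r*t)]
    have hp : 0 < r ^ (1+2*s) := Real.rpow_pos_of_pos hr0 _
    have hcos : 1 - Real.cos (r*t) ≤ (r*t)^2/2 := by
      nlinarith [Real.one_sub_sq_div_two_le_cos (x := r*t)]
    have h2 : 0 ≤ r ^ (1-2*s) := (Real.rpow_pos_of_pos hr0 _).le
    rw [Real.norm_eq_abs, Real.norm_eq_abs, abs_of_nonneg (by positivity),
        abs_of_nonneg (by positivity)]
    rw [div_le_iff₀ hp]
    have hr2 : r ^ (1 - 2*s) * r ^ (1 + 2*s) = r ^ 2 := by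
      rw [← Real.rpow_add hr0, show (1-2*s)+(1+2*s) = ((2:ℕ):ℝ) by push_cast; ring,
          Real.rpow_natCast]
    nlinarith [hr2]

private lemma aux_lower (s a t : ℝ) (hs : 0 < s) (hs1 : s < 1) (ha : 0 < a)
    (hat : a * |t| ≤ 1) :
    2 / Real.pi^2 * t^2 * (a ^ (2 - 2*s) / (2 - 2*s)) ≤
      ∫ r in Set.Ioc (0:ℝ) a, (1 - Real.cos (r * t)) / r ^ (1 + 2*s) := by
  have hg : IntegrableOn (fun r : ℝ => 2 / Real.pi^2 * t^2 * r ^ (1 - 2*s))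
      (Set.Ioc (0:ℝ) a) := by
    exact ((intervalIntegral.intervalIntegrable_rpow' (by linarith)).1).const_mul _
  have hmono := setIntegral_mono_on hg (aux_integrable s a t hs hs1 ha)
      measurableSet_Ioc ?_
  · calc 2 / Real.pi^2 * t^2 * (a ^ (2 - 2*s) / (2 - 2*s))
        = ∫ r in Set.Ioc (0:ℝ) a, 2 / Real.pi^2 * t^2 * r ^ (1 - 2*s) := by
          rw [integral_const_mul, aux_rpow_int s a hs1 ha]
      _ ≤ _ := hmono
  · intro r hr
    have hr0 : 0 < r := hr.1
    have habs : |r * t| ≤ Real.pi := by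
      have : |r * t| = r * |t| := by rw [abs_mul, abs_of_pos hr0]
      have h2 : r * |t| ≤ a * |t| := mul_le_mul_of_nonneg_right hr.2 (abs_nonneg t)
      nlinarith [Real.pi_gt_three]
    have hcos := Real.cos_le_one_sub_mul_cos_sq habs
    have hp : 0 < r ^ (1+2*s) := Real.rpow_pos_of_pos hr0 _
    rw [le_div_iff₀ hp]
    have hr2 : r ^ (1 - 2*s) * r ^ (1 + 2*s) = r ^ 2 := by
      rw [← Real.rpow_add hr0, show (1-2*s)+(1+2*s) = ((2:ℕ):ℝ) by push_cast; ring,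
          Real.rpow_natCast]
    have hpi : 0 < Real.pi := Real.pi_pos
    have : 2 / Real.pi^2 * t^2 * r ^ (1-2*s) * r ^ (1+2*s)
        = 2 / Real.pi^2 * (r*t)^2 := by
      rw [mul_assoc, hr2]; ring
    rw [this]
    nlinarith [sq_nonneg (r*t)]

/-- For `0 < s < 1` there is `c_s > 0`, independent of `δ` and `t`, such that for all
`0 < δ ≤ 1` and every real `t`,
`∫₀^δ (1 - cos(rt)) / r^{1+2s} dr ≥ c_s δ^{2-2s} min{t², |t|^{2s}}`. -/
theorem integral_one_sub_cos_lower (s : ℝ) (hs : 0 < s) (hs1 : s < 1) :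
    ∃ c > 0, ∀ δ : ℝ, 0 < δ → δ ≤ 1 → ∀ t : ℝ,
      c * δ ^ (2 - 2 * s) * min (t ^ 2) (|t| ^ (2 * s)) ≤
        ∫ r in Set.Ioc (0 : ℝ) δ, (1 - Real.cos (r * t)) / r ^ (1 + 2 * s) := by
  have hpi : 0 < Real.pi := Real.pi_pos
  have h1s : 0 < 1 - s := by linarith
  refine ⟨1 / (Real.pi^2 * (1 - s)), by positivity, fun δ hδ hδ1 t => ?_⟩
  set c : ℝ := 1 / (Real.pi^2 * (1 - s)) with hc
  have hcpos : 0 < c := by positivity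
  have hkey : ∀ a : ℝ, 0 < a → a * |t| ≤ 1 →
      c * t^2 * a ^ (2 - 2*s) ≤
        ∫ r in Set.Ioc (0:ℝ) a, (1 - Real.cos (r * t)) / r ^ (1 + 2*s) := by
    intro a ha hat
    have hπ : Real.pi ≠ 0 := hpi.ne'
    have h2s : (2:ℝ) - 2*s ≠ 0 := by intro h; linarith
    have h1s' : (1:ℝ) - s ≠ 0 := h1s.ne'
    have heq : c * t^2 * a ^ (2 - 2*s) = 2 / Real.pi^2 * t^2 * (a ^ (2 - 2*s) / (2 - 2*s)) := by
      rw [hc]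
      field_simp
    rw [heq]
    exact aux_lower s a t hs hs1 ha hat
  rcases le_or_gt (δ * |t|) 1 with hcase | hcase
  · -- small |t|: use the whole interval and min ≤ t^2
    have h1 := hkey δ hδ hcase
    have hδpow : 0 ≤ δ ^ (2 - 2*s) := (Real.rpow_pos_of_pos hδ _).le
    have hmin : min (t ^ 2) (|t| ^ (2 * s)) ≤ t^2 := min_le_left _ _
    nlinarith [mul_le_mul_of_nonneg_left hmin (mul_nonneg hcpos.le hδpow)]
  · -- large |t|: restrict to (0, 1/|t|]
    have ht : 0 < |t| := by
      by_contra h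
      push_neg at h
      have : |t| = 0 := le_antisymm h (abs_nonneg t)
      rw [this] at hcase; nlinarith
    set a : ℝ := |t|⁻¹ with hadef
    have ha : 0 < a := by positivity
    have hat1 : a * |t| = 1 := inv_mul_cancel₀ ht.ne'
    have haδ : a ≤ δ := by nlinarith
    have h1 := hkey a ha hat1.le
    have h2 : (∫ r in Set.Ioc (0:ℝ) a, (1 - Real.cos (r * t)) / r ^ (1 + 2*s)) ≤
        ∫ r in Set.Ioc (0:ℝ) δ, (1 - Real.cos (r * t)) / r ^ (1 + 2*s) := by
      apply setIntegral_mono_set (aux_integrable s δ t hs hs1 hδ)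
      · filter_upwards [ae_restrict_mem measurableSet_Ioc] with r hr
        exact div_nonneg (by nlinarith [Real.cos_le_one (r*t)])
          (Real.rpow_pos_of_pos hr.1 _).le
      · exact (Set.Ioc_subset_Ioc_right haδ).eventuallyLE
    have hpow : t^2 * a ^ (2 - 2*s) = |t| ^ (2*s) := by
      rw [hadef, Real.inv_rpow (abs_nonneg t), ← Real.rpow_neg (abs_nonneg t),
          ← sq_abs t, ← Real.rpow_natCast |t| 2, ← Real.rpow_add ht]
      norm_num
    have h3 : c * |t| ^ (2*s) ≤
        ∫ r in Set.Ioc (0:ℝ) δ, (1 - Real.cos (r * t)) / r ^ (1 + 2*s) := by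
      calc c * |t| ^ (2*s) = c * t^2 * a ^ (2 - 2*s) := by rw [← hpow]; ring
        _ ≤ _ := h1.trans h2
    have hδpow : δ ^ (2 - 2*s) ≤ 1 := Real.rpow_le_one hδ.le hδ1 (by linarith)
    have hδpow0 : 0 ≤ δ ^ (2 - 2*s) := (Real.rpow_pos_of_pos hδ _).le
    have hmin : min (t ^ 2) (|t| ^ (2 * s)) ≤ |t| ^ (2*s) := min_le_right _ _
    have hmin0 : 0 ≤ min (t ^ 2) (|t| ^ (2 * s)) :=
      le_min (sq_nonneg t) (Real.rpow_nonneg (abs_nonneg t) _)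
    calc c * δ ^ (2 - 2 * s) * min (t ^ 2) (|t| ^ (2 * s))
        ≤ c * 1 * (|t| ^ (2*s)) :=
          mul_le_mul (mul_le_mul_of_nonneg_left hδpow hcpos.le) hmin hmin0 (by positivity)
      _ = c * |t| ^ (2*s) := by ring
      _ ≤ _ := h3
end

section
/- Let v, v_* ∈ ℝ³, σ ∈ 𝕊² with (v−v_*)·σ ≥ 0, let v' = (v+v_*)/2 + (|v−v_*|/2)σ, and for λ ∈ [0,1] set v_λ = v + λ(v' − v). Then ⟨v⟩ ≤ (1+√2) ⟨v_λ⟩ ⟨v_*⟩ and ⟨v_λ⟩ ≤ (1+√2) ⟨v⟩ ⟨v_*⟩, where ⟨w⟩ = (1+|w|²)^{1/2}. -/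
lemma sqrt_bracket_le (s a b c : ℝ) (hs : 0 ≤ s)
    (h : 1 + c ^ 2 ≤ (1 + s) ^ 2 * ((1 + a ^ 2) * (1 + b ^ 2))) :
    Real.sqrt (1 + c ^ 2) ≤ (1 + s) * Real.sqrt (1 + a ^ 2) * Real.sqrt (1 + b ^ 2) := by
  have h1 : (1 + s) * Real.sqrt (1 + a ^ 2) * Real.sqrt (1 + b ^ 2)
      = Real.sqrt ((1 + s) ^ 2 * ((1 + a ^ 2) * (1 + b ^ 2))) := by
    rw [Real.sqrt_mul (by positivity), Real.sqrt_mul (by positivity),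
      Real.sqrt_sq (by positivity), mul_assoc]
  rw [h1]
  exact Real.sqrt_le_sqrt h

set_option maxHeartbeats 1000000 in
/-- With `v' = (v+v_*)/2 + (|v-v_*|/2)σ`, `(v-v_*)·σ ≥ 0`, and `v_λ = v + λ(v'-v)` for
`λ ∈ [0,1]`, the brackets satisfy `⟨v⟩ ≤ (1+√2)⟨v_λ⟩⟨v_*⟩` and
`⟨v_λ⟩ ≤ (1+√2)⟨v⟩⟨v_*⟩`, where `⟨w⟩ = (1+|w|²)^{1/2}`. -/
theorem bracket_bounds_along_collision (v vs σ : EuclideanSpace ℝ (Fin 3))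
    (hσ : ‖σ‖ = 1) (hpos : (0 : ℝ) ≤ inner ℝ (v - vs) σ) (lam : ℝ)
    (hl0 : 0 ≤ lam) (hl1 : lam ≤ 1) :
    Real.sqrt (1 + ‖v‖ ^ 2) ≤
        (1 + Real.sqrt 2) *
          Real.sqrt (1 + ‖v + lam • ((((1 : ℝ) / 2) • (v + vs) + (‖v - vs‖ / 2) • σ) - v)‖ ^ 2) *
          Real.sqrt (1 + ‖vs‖ ^ 2) ∧
      Real.sqrt (1 + ‖v + lam • ((((1 : ℝ) / 2) • (v + vs) + (‖v - vs‖ / 2) • σ) - v)‖ ^ 2) ≤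
        (1 + Real.sqrt 2) * Real.sqrt (1 + ‖v‖ ^ 2) * Real.sqrt (1 + ‖vs‖ ^ 2) := by
  have hs0 : (0:ℝ) ≤ Real.sqrt 2 := Real.sqrt_nonneg 2
  have hs2 : Real.sqrt 2 ^ 2 = 2 := Real.sq_sqrt (by norm_num)
  have hs1 : (1:ℝ) ≤ Real.sqrt 2 := by nlinarith [hs0, hs2]
  set s := Real.sqrt 2 with hsdef
  set d := (((1:ℝ)/2) • (v + vs) + (‖v - vs‖ / 2) • σ) - v with hdvv
  set vl := v + lam • d with hvldef
  have hr0 : (0:ℝ) ≤ ‖v - vs‖ := norm_nonneg _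
  have hd : d = (‖v - vs‖/2) • σ - ((1:ℝ)/2) • (v - vs) := by rw [hdvv]; module
  have hiσ : inner ℝ (v - vs) σ ≤ ‖v - vs‖ := by
    calc (inner ℝ (v - vs) σ : ℝ) ≤ ‖v - vs‖ * ‖σ‖ := real_inner_le_norm _ _
    _ = ‖v - vs‖ := by rw [hσ, mul_one]
  have hd2 : ‖d‖ ^ 2 = ‖v - vs‖ ^ 2 / 2 - (‖v - vs‖ / 2) * inner ℝ (v - vs) σ := by
    rw [hd, norm_sub_sq_real, real_inner_smul_left, real_inner_smul_right,
      norm_smul, norm_smul, real_inner_comm σ (v - vs)]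
    simp only [Real.norm_eq_abs, abs_of_nonneg (by positivity : (0:ℝ) ≤ ‖v - vs‖/2),
      abs_of_nonneg (by norm_num : (0:ℝ) ≤ (1:ℝ)/2), hσ, mul_one]
    ring
  -- the moved point minus v
  have hwv : vl - v = lam • d := by rw [hvldef]; abel
  have hw1 : ‖vl - v‖ ^ 2 ≤ ‖v - vs‖ ^ 2 / 2 := by
    rw [hwv, norm_smul, Real.norm_eq_abs, abs_of_nonneg hl0, mul_pow]
    have hll : lam ^ 2 ≤ 1 := by nlinarith
    nlinarith [hd2, hll, sq_nonneg ‖d‖, mul_nonneg hr0 hpos,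
      mul_nonneg (sub_nonneg.2 hll) (sq_nonneg ‖d‖)]
  have hvls : vl - vs = (1 - lam/2) • (v - vs) + (lam * ‖v - vs‖ / 2) • σ := by
    rw [hvldef, hd]; module
  have hw2 : ‖v - vs‖ ^ 2 ≤ 2 * ‖vl - vs‖ ^ 2 := by
    rw [hvls, norm_add_sq_real, real_inner_smul_left, real_inner_smul_right,
      norm_smul, norm_smul]
    simp only [Real.norm_eq_abs, abs_of_nonneg (by linarith : (0:ℝ) ≤ 1 - lam/2),
      abs_of_nonneg (by positivity : (0:ℝ) ≤ lam * ‖v - vs‖ / 2), hσ, mul_one]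
    nlinarith [sq_nonneg ((1 - lam) * ‖v - vs‖), mul_nonneg (mul_nonneg hl0 hr0) hpos,
      mul_nonneg (mul_nonneg (by linarith : (0:ℝ) ≤ 1 - lam/2) hl0) (mul_nonneg hr0 hpos)]
  clear_value s d vl
  -- scalar bounds
  have hrb : ‖v - vs‖ ≤ s * ‖vl - vs‖ := by
    nlinarith [hw2, hs2, norm_nonneg (vl - vs), hr0, mul_nonneg hs0 (norm_nonneg (vl - vs))]
  have hwl : ‖vl - v‖ ≤ (s/2) * ‖v - vs‖ := by
    nlinarith [hw1, hs2, norm_nonneg (vl - v), hr0, mul_nonneg (by positivity : (0:ℝ) ≤ s/2) hr0]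
  have hAr : ‖v‖ ≤ ‖vs‖ + ‖v - vs‖ := by
    calc ‖v‖ = ‖vs + (v - vs)‖ := by rw [add_sub_cancel]
    _ ≤ ‖vs‖ + ‖v - vs‖ := norm_add_le _ _
  have hXr : ‖vl‖ ≤ ‖v‖ + ‖vl - v‖ := by
    calc ‖vl‖ = ‖v + (vl - v)‖ := by rw [add_sub_cancel]
    _ ≤ ‖v‖ + ‖vl - v‖ := norm_add_le _ _
  have h1 : ‖v‖ ≤ s * ‖vl‖ + (1 + s) * ‖vs‖ := by
    nlinarith [hAr, hrb, norm_sub_le vl vs, hs0]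
  have h2 : ‖vl‖ ≤ (1 + s/2) * ‖v‖ + (s/2) * ‖vs‖ := by
    nlinarith [hXr, hwl, norm_sub_le v vs, hs0]
  have hA0 : (0:ℝ) ≤ ‖v‖ := norm_nonneg _
  have hX0 : (0:ℝ) ≤ ‖vl‖ := norm_nonneg _
  have hB0 : (0:ℝ) ≤ ‖vs‖ := norm_nonneg _
  constructor
  · apply sqrt_bracket_le _ _ _ _ hs0
    have hA2 : ‖v‖ ^ 2 ≤ (s * ‖vl‖ + (1 + s) * ‖vs‖) ^ 2 := pow_le_pow_left₀ hA0 h1 2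
    nlinarith [hA2, hs2, hs1, hX0, hB0, sq_nonneg (‖vl‖ * ‖vs‖ - 1), sq_nonneg ‖vl‖,
      mul_nonneg hX0 hB0, sq_nonneg (‖vl‖ * ‖vs‖), mul_nonneg (mul_nonneg hX0 hB0) hs0]
  · apply sqrt_bracket_le _ _ _ _ hs0
    have hX2 : ‖vl‖ ^ 2 ≤ ((1 + s/2) * ‖v‖ + (s/2) * ‖vs‖) ^ 2 := pow_le_pow_left₀ hX0 h2 2
    nlinarith [hX2, hs2, hs1, hA0, hB0, sq_nonneg (‖v‖ * ‖vs‖ - 1), sq_nonneg ‖v‖,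
      mul_nonneg hA0 hB0, sq_nonneg (‖v‖ * ‖vs‖), mul_nonneg (mul_nonneg hA0 hB0) hs0]
end

section
/- Fix s ∈ (0,1) and γ ∈ ℝ, and define ã(v,η) = ⟨v⟩^γ (1 + |v|² + |η|² + |η ∧ v|²)^s on ℝ³ × ℝ³, where η ∧ v is the cross product. Then there is a constant C (depending only on s, γ) such that for all (y,η), (y',η') ∈ ℝ³ × ℝ³: ã(y,η) ≤ C ã(y',η') (⟨y − y'⟩ + ⟨η − η'⟩)^{4s + |γ|}. -/
/-- Cross product on `ℝ³` (Euclidean). -/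
noncomputable def cross3 (u w : EuclideanSpace ℝ (Fin 3)) : EuclideanSpace ℝ (Fin 3) :=
  (WithLp.equiv 2 (Fin 3 → ℝ)).symm
    ![u 1 * w 2 - u 2 * w 1, u 2 * w 0 - u 0 * w 2, u 0 * w 1 - u 1 * w 0]

/-- The weight `ã(v,η) = ⟨v⟩^γ (1+|v|²+|η|²+|η∧v|²)^s`. -/
noncomputable def atilde (s γ : ℝ) (v η : EuclideanSpace ℝ (Fin 3)) : ℝ :=
  Real.sqrt (1 + ‖v‖ ^ 2) ^ γ * (1 + ‖v‖ ^ 2 + ‖η‖ ^ 2 + ‖cross3 η v‖ ^ 2) ^ s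

lemma euclid_norm_sq (x : EuclideanSpace ℝ (Fin 3)) :
    ‖x‖ ^ 2 = x 0 ^ 2 + x 1 ^ 2 + x 2 ^ 2 := by
  rw [EuclideanSpace.norm_eq, Real.sq_sqrt (by positivity)]
  simp [Fin.sum_univ_three, Real.norm_eq_abs, sq_abs]

lemma cross3_apply (u w : EuclideanSpace ℝ (Fin 3)) (i : Fin 3) :
    cross3 u w i = ![u 1 * w 2 - u 2 * w 1, u 2 * w 0 - u 0 * w 2, u 0 * w 1 - u 1 * w 0] i := rfl

lemma cross3_add_left (a b c : EuclideanSpace ℝ (Fin 3)) :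
    cross3 (a + b) c = cross3 a c + cross3 b c := by
  ext i
  have h : ∀ j : Fin 3, (a + b) j = a j + b j := fun j => rfl
  have h2 : (cross3 a c + cross3 b c) i = cross3 a c i + cross3 b c i := rfl
  fin_cases i <;> simp [h2, cross3_apply, h] <;> ring

lemma cross3_add_right (a b c : EuclideanSpace ℝ (Fin 3)) :
    cross3 a (b + c) = cross3 a b + cross3 a c := by
  ext i
  have h : ∀ j : Fin 3, (b + c) j = b j + c j := fun j => rfl
  have h2 : (cross3 a b + cross3 a c) i = cross3 a b i + cross3 a c i := rfl
  fin_cases i <;> simp [h2, cross3_apply, h] <;> ring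

lemma norm_cross3_le (a b : EuclideanSpace ℝ (Fin 3)) : ‖cross3 a b‖ ≤ ‖a‖ * ‖b‖ := by
  have h2 : ‖cross3 a b‖ ^ 2 ≤ (‖a‖ * ‖b‖) ^ 2 := by
    rw [euclid_norm_sq, mul_pow, euclid_norm_sq a, euclid_norm_sq b]
    have h0 : cross3 a b 0 = a 1 * b 2 - a 2 * b 1 := rfl
    have h1 : cross3 a b 1 = a 2 * b 0 - a 0 * b 2 := rfl
    have h3 : cross3 a b 2 = a 0 * b 1 - a 1 * b 0 := rfl
    rw [h0, h1, h3]
    nlinarith [sq_nonneg (a 0 * b 0 + a 1 * b 1 + a 2 * b 2)]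
  exact le_of_pow_le_pow_left₀ two_ne_zero (by positivity) h2

lemma sum4_sq_le (a b c d : ℝ) : (a + b + c + d) ^ 2 ≤ 4 * (a^2 + b^2 + c^2 + d^2) := by
  nlinarith [sq_nonneg (a-b), sq_nonneg (a-c), sq_nonneg (a-d), sq_nonneg (b-c),
    sq_nonneg (b-d), sq_nonneg (c-d)]


lemma sq_add_le_two (a b : ℝ) : (a + b) ^ 2 ≤ 2 * a ^ 2 + 2 * b ^ 2 := by
  nlinarith [sq_nonneg (a - b)]

lemma peetre_sq (a b c : ℝ) (h : a ≤ b + c) (ha : 0 ≤ a) :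
    1 + a ^ 2 ≤ 2 * (1 + b ^ 2) * (1 + c ^ 2) := by
  nlinarith [sq_nonneg (b - c), sq_nonneg (b + c), mul_nonneg (sq_nonneg b) (sq_nonneg c)]

lemma one_le_sqrt_one_add (x : ℝ) : 1 ≤ Real.sqrt (1 + x ^ 2) := by
  have h := Real.sqrt_le_sqrt (show (1:ℝ) ≤ 1 + x ^ 2 by nlinarith [sq_nonneg x])
  simpa using h

set_option maxHeartbeats 1600000 in
/-- Temperance of the weight `ã`: for some constant `C = C(s,γ)`,
`ã(y,η) ≤ C ã(y',η') (⟨y-y'⟩ + ⟨η-η'⟩)^{4s+|γ|}` for all points. -/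
theorem atilde_temperate (s γ : ℝ) (hs : 0 < s) (hs1 : s < 1) :
    ∃ C > 0, ∀ y η y' η' : EuclideanSpace ℝ (Fin 3),
      atilde s γ y η ≤
        C * atilde s γ y' η' *
          (Real.sqrt (1 + ‖y - y'‖ ^ 2) + Real.sqrt (1 + ‖η - η'‖ ^ 2)) ^ (4 * s + |γ|) := by
  refine ⟨2 ^ (|γ| / 2) * 16 ^ s, by positivity, ?_⟩
  intro y η y' η'
  simp only [atilde]
  set u : EuclideanSpace ℝ (Fin 3) := y - y' with hu
  set v : EuclideanSpace ℝ (Fin 3) := η - η' with hv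
  set U : ℝ := Real.sqrt (1 + ‖u‖ ^ 2) with hUdef
  set V : ℝ := Real.sqrt (1 + ‖v‖ ^ 2) with hVdef
  have hU0 : 0 ≤ U := Real.sqrt_nonneg _
  have hV0 : 0 ≤ V := Real.sqrt_nonneg _
  have hUsq : U ^ 2 = 1 + ‖u‖ ^ 2 := Real.sq_sqrt (by positivity)
  have hVsq : V ^ 2 = 1 + ‖v‖ ^ 2 := Real.sq_sqrt (by positivity)
  have hU1 : 1 ≤ U := one_le_sqrt_one_add _
  have hV1 : 1 ≤ V := one_le_sqrt_one_add _
  set S : ℝ := U + V with hSdef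
  have hS0 : 0 < S := by linarith
  have hUS : U ≤ S := by linarith
  -- norms
  have hyy : y = y' + u := by rw [hu]; abel
  have hηη : η = η' + v := by rw [hv]; abel
  have hny : ‖y‖ ≤ ‖y'‖ + ‖u‖ := by
    calc ‖y‖ = ‖y' + u‖ := by rw [← hyy]
      _ ≤ ‖y'‖ + ‖u‖ := norm_add_le _ _
  have hnη : ‖η‖ ≤ ‖η'‖ + ‖v‖ := by
    calc ‖η‖ = ‖η' + v‖ := by rw [← hηη]
      _ ≤ ‖η'‖ + ‖v‖ := norm_add_le _ _
  -- cross product expansion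
  have hcr : cross3 η y = cross3 η' y' + cross3 η' u + cross3 v y' + cross3 v u := by
    rw [hyy, hηη, cross3_add_left, cross3_add_right, cross3_add_right]; abel
  have hcross : ‖cross3 η y‖ ≤ ‖cross3 η' y'‖ + ‖η'‖ * ‖u‖ + ‖v‖ * ‖y'‖ + ‖v‖ * ‖u‖ := by
    rw [hcr]
    calc ‖cross3 η' y' + cross3 η' u + cross3 v y' + cross3 v u‖
        ≤ ‖cross3 η' y'‖ + ‖cross3 η' u‖ + ‖cross3 v y'‖ + ‖cross3 v u‖ := by
          refine le_trans (norm_add_le _ _) ?_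
          refine add_le_add (le_trans (norm_add_le _ _) ?_) le_rfl
          exact add_le_add (norm_add_le _ _) le_rfl
      _ ≤ ‖cross3 η' y'‖ + ‖η'‖ * ‖u‖ + ‖v‖ * ‖y'‖ + ‖v‖ * ‖u‖ := by
          gcongr <;> [exact norm_cross3_le _ _; exact norm_cross3_le _ _; exact norm_cross3_le _ _]
  -- weight components
  set A : ℝ := 1 + ‖y‖ ^ 2 + ‖η‖ ^ 2 + ‖cross3 η y‖ ^ 2 with hAdef
  set A' : ℝ := 1 + ‖y'‖ ^ 2 + ‖η'‖ ^ 2 + ‖cross3 η' y'‖ ^ 2 with hA'def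
  have hA1 : (1:ℝ) ≤ A := by
    rw [hAdef]; linarith [sq_nonneg ‖y‖, sq_nonneg ‖η‖, sq_nonneg ‖cross3 η y‖]
  have hA'1 : (1:ℝ) ≤ A' := by
    rw [hA'def]; linarith [sq_nonneg ‖y'‖, sq_nonneg ‖η'‖, sq_nonneg ‖cross3 η' y'‖]
  -- key algebraic bound
  have hAbound : A ≤ 16 * A' * ((1 + ‖u‖ ^ 2) * (1 + ‖v‖ ^ 2)) := by
    have h1 : ‖cross3 η y‖ ^ 2 ≤
        4 * (‖cross3 η' y'‖ ^ 2 + ‖η'‖ ^ 2 * ‖u‖ ^ 2 + ‖v‖ ^ 2 * ‖y'‖ ^ 2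
          + ‖v‖ ^ 2 * ‖u‖ ^ 2) := by
      calc ‖cross3 η y‖ ^ 2
          ≤ (‖cross3 η' y'‖ + ‖η'‖ * ‖u‖ + ‖v‖ * ‖y'‖ + ‖v‖ * ‖u‖) ^ 2 :=
            pow_le_pow_left₀ (norm_nonneg _) hcross 2
        _ ≤ 4 * ((‖cross3 η' y'‖)^2 + (‖η'‖ * ‖u‖)^2 + (‖v‖ * ‖y'‖)^2 + (‖v‖ * ‖u‖)^2) :=
            sum4_sq_le _ _ _ _
        _ = 4 * (‖cross3 η' y'‖ ^ 2 + ‖η'‖ ^ 2 * ‖u‖ ^ 2 + ‖v‖ ^ 2 * ‖y'‖ ^ 2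
            + ‖v‖ ^ 2 * ‖u‖ ^ 2) := by ring
    have h2 : ‖y‖ ^ 2 ≤ 2 * ‖y'‖ ^ 2 + 2 * ‖u‖ ^ 2 :=
      le_trans (pow_le_pow_left₀ (norm_nonneg y) hny 2) (sq_add_le_two _ _)
    have h3 : ‖η‖ ^ 2 ≤ 2 * ‖η'‖ ^ 2 + 2 * ‖v‖ ^ 2 :=
      le_trans (pow_le_pow_left₀ (norm_nonneg η) hnη 2) (sq_add_le_two _ _)
    have hexp : 16 * A' * ((1 + ‖u‖ ^ 2) * (1 + ‖v‖ ^ 2)) =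
        16 + 16*‖y'‖^2 + 16*‖η'‖^2 + 16*‖cross3 η' y'‖^2
        + 16*‖u‖^2 + 16*‖y'‖^2*‖u‖^2 + 16*‖η'‖^2*‖u‖^2 + 16*‖cross3 η' y'‖^2*‖u‖^2
        + 16*‖v‖^2 + 16*‖y'‖^2*‖v‖^2 + 16*‖η'‖^2*‖v‖^2 + 16*‖cross3 η' y'‖^2*‖v‖^2
        + 16*‖u‖^2*‖v‖^2 + 16*‖y'‖^2*‖u‖^2*‖v‖^2 + 16*‖η'‖^2*‖u‖^2*‖v‖^2
        + 16*‖cross3 η' y'‖^2*‖u‖^2*‖v‖^2 := by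
      rw [hA'def]; ring
    have n1 : (0:ℝ) ≤ ‖y'‖^2 := sq_nonneg _
    have n2 : (0:ℝ) ≤ ‖η'‖^2 := sq_nonneg _
    have n3 : (0:ℝ) ≤ ‖cross3 η' y'‖^2 := sq_nonneg _
    have n4 : (0:ℝ) ≤ ‖u‖^2 := sq_nonneg _
    have n5 : (0:ℝ) ≤ ‖v‖^2 := sq_nonneg _
    have m1 : (0:ℝ) ≤ ‖y'‖^2*‖u‖^2 := mul_nonneg n1 n4
    have m2 : (0:ℝ) ≤ ‖η'‖^2*‖u‖^2 := mul_nonneg n2 n4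
    have m3 : (0:ℝ) ≤ ‖cross3 η' y'‖^2*‖u‖^2 := mul_nonneg n3 n4
    have m4 : (0:ℝ) ≤ ‖y'‖^2*‖v‖^2 := mul_nonneg n1 n5
    have m5 : (0:ℝ) ≤ ‖η'‖^2*‖v‖^2 := mul_nonneg n2 n5
    have m6 : (0:ℝ) ≤ ‖cross3 η' y'‖^2*‖v‖^2 := mul_nonneg n3 n5
    have m7 : (0:ℝ) ≤ ‖u‖^2*‖v‖^2 := mul_nonneg n4 n5
    have m8 : (0:ℝ) ≤ ‖y'‖^2*‖u‖^2*‖v‖^2 := mul_nonneg m1 n5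
    have m9 : (0:ℝ) ≤ ‖η'‖^2*‖u‖^2*‖v‖^2 := mul_nonneg m2 n5
    have m10 : (0:ℝ) ≤ ‖cross3 η' y'‖^2*‖u‖^2*‖v‖^2 := mul_nonneg m3 n5
    rw [hAdef, hexp]
    linarith
  -- rpow bound for the second factor
  have hQS : (1 + ‖u‖ ^ 2) * (1 + ‖v‖ ^ 2) ≤ S ^ (4:ℕ) := by
    have hUV : U * V ≤ S * S := mul_le_mul hUS (by linarith) hV0 (by linarith)
    calc (1 + ‖u‖ ^ 2) * (1 + ‖v‖ ^ 2) = (U * V) ^ 2 := by rw [mul_pow, hUsq, hVsq]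
      _ ≤ (S * S) ^ 2 := pow_le_pow_left₀ (mul_nonneg hU0 hV0) hUV 2
      _ = S ^ (4:ℕ) := by ring
  have hAs : A ^ s ≤ 16 ^ s * A' ^ s * S ^ (4 * s) := by
    have step1 : A ^ s ≤ (16 * A' * ((1 + ‖u‖ ^ 2) * (1 + ‖v‖ ^ 2))) ^ s :=
      Real.rpow_le_rpow (by linarith) hAbound hs.le
    have step2 : (16 * A' * ((1 + ‖u‖ ^ 2) * (1 + ‖v‖ ^ 2))) ^ s
        = 16 ^ s * A' ^ s * ((1 + ‖u‖ ^ 2) * (1 + ‖v‖ ^ 2)) ^ s := by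
      rw [Real.mul_rpow (by positivity) (by positivity),
        Real.mul_rpow (by norm_num) (by linarith)]
    have step3 : ((1 + ‖u‖ ^ 2) * (1 + ‖v‖ ^ 2)) ^ s ≤ S ^ (4 * s) := by
      calc ((1 + ‖u‖ ^ 2) * (1 + ‖v‖ ^ 2)) ^ s ≤ ((S:ℝ) ^ (4:ℕ)) ^ s :=
            Real.rpow_le_rpow (by positivity) hQS hs.le
        _ = S ^ (4 * s) := by
            rw [← Real.rpow_natCast S 4, ← Real.rpow_mul hS0.le]
            norm_num
    calc A ^ s ≤ 16 ^ s * A' ^ s * ((1 + ‖u‖ ^ 2) * (1 + ‖v‖ ^ 2)) ^ s := by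
          rw [← step2]; exact step1
      _ ≤ 16 ^ s * A' ^ s * S ^ (4 * s) :=
          mul_le_mul_of_nonneg_left step3 (by positivity)
  -- Peetre inequality for the ⟨·⟩^γ factor
  set B : ℝ := Real.sqrt (1 + ‖y‖ ^ 2) with hBdef
  set B' : ℝ := Real.sqrt (1 + ‖y'‖ ^ 2) with hB'def
  have hBsq : B ^ 2 = 1 + ‖y‖ ^ 2 := Real.sq_sqrt (by positivity)
  have hB'sq : B' ^ 2 = 1 + ‖y'‖ ^ 2 := Real.sq_sqrt (by positivity)
  have hB0 : 0 < B := Real.sqrt_pos.mpr (by positivity)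
  have hB'0 : 0 < B' := Real.sqrt_pos.mpr (by positivity)
  have hsqrt2 : Real.sqrt 2 = (2:ℝ) ^ ((1:ℝ)/2) := by
    rw [Real.sqrt_eq_rpow]
  have hpeetre1 : B ≤ Real.sqrt 2 * B' * U := by
    have hsq : B ^ 2 ≤ (Real.sqrt 2 * B' * U) ^ 2 := by
      have h2 : (Real.sqrt 2) ^ 2 = 2 := Real.sq_sqrt (by norm_num)
      have he : (Real.sqrt 2 * B' * U) ^ 2 = 2 * B' ^ 2 * U ^ 2 := by
        rw [mul_pow, mul_pow, h2]
      rw [he, hBsq, hB'sq, hUsq]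
      exact peetre_sq _ _ _ hny (norm_nonneg y)
    exact le_of_pow_le_pow_left₀ two_ne_zero (by positivity) hsq
  have hpeetre2 : B' ≤ Real.sqrt 2 * B * U := by
    have hsq : B' ^ 2 ≤ (Real.sqrt 2 * B * U) ^ 2 := by
      have h2 : (Real.sqrt 2) ^ 2 = 2 := Real.sq_sqrt (by norm_num)
      have he : (Real.sqrt 2 * B * U) ^ 2 = 2 * B ^ 2 * U ^ 2 := by
        rw [mul_pow, mul_pow, h2]
      rw [he, hBsq, hB'sq, hUsq]
      have hny' : ‖y'‖ ≤ ‖y‖ + ‖u‖ := by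
        have h' : y' = y + (-u) := by rw [hu]; abel
        calc ‖y'‖ = ‖y + -u‖ := by rw [← h']
          _ ≤ ‖y‖ + ‖-u‖ := norm_add_le _ _
          _ = ‖y‖ + ‖u‖ := by rw [norm_neg]
      exact peetre_sq _ _ _ hny' (norm_nonneg y')
    exact le_of_pow_le_pow_left₀ two_ne_zero (by positivity) hsq
  have hBγ : B ^ γ ≤ 2 ^ (|γ| / 2) * B' ^ γ * U ^ |γ| := by
    rcases le_or_gt 0 γ with hγ | hγ
    · have habs : |γ| = γ := abs_of_nonneg hγ
      rw [habs]
      calc B ^ γ ≤ (Real.sqrt 2 * B' * U) ^ γ :=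
            Real.rpow_le_rpow hB0.le hpeetre1 hγ
        _ = (Real.sqrt 2) ^ γ * B' ^ γ * U ^ γ := by
            rw [Real.mul_rpow (by positivity) hU0,
              Real.mul_rpow (Real.sqrt_nonneg 2) hB'0.le]
        _ = 2 ^ (γ / 2) * B' ^ γ * U ^ γ := by
            rw [hsqrt2, ← Real.rpow_mul (by norm_num : (0:ℝ) ≤ 2)]
            ring_nf
    · have habs : |γ| = -γ := abs_of_neg hγ
      set m : ℝ := -γ with hm
      have hm0 : 0 < m := by rw [hm]; linarith
      have key : B' ^ m ≤ 2 ^ (m / 2) * B ^ m * U ^ m := by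
        calc B' ^ m ≤ (Real.sqrt 2 * B * U) ^ m :=
              Real.rpow_le_rpow hB'0.le hpeetre2 hm0.le
          _ = (Real.sqrt 2) ^ m * B ^ m * U ^ m := by
              rw [Real.mul_rpow (by positivity) hU0,
                Real.mul_rpow (Real.sqrt_nonneg 2) hB0.le]
          _ = 2 ^ (m / 2) * B ^ m * U ^ m := by
              rw [hsqrt2, ← Real.rpow_mul (by norm_num : (0:ℝ) ≤ 2)]
              ring_nf
      have hBm : 0 < B ^ m := Real.rpow_pos_of_pos hB0 m
      have hB'm : 0 < B' ^ m := Real.rpow_pos_of_pos hB'0 m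
      have hgoal : (B ^ m)⁻¹ ≤ 2 ^ (m / 2) * (B' ^ m)⁻¹ * U ^ m := by
        have h2m : (0:ℝ) < 2 ^ (m / 2) := Real.rpow_pos_of_pos (by norm_num) _
        have hUm : (0:ℝ) < U ^ m := Real.rpow_pos_of_pos (by linarith) m
        rw [inv_le_iff_one_le_mul₀ hBm]
        have : B' ^ m * (2 ^ (m / 2) * (B' ^ m)⁻¹ * U ^ m) =
            2 ^ (m / 2) * U ^ m := by field_simp
        calc (1:ℝ) = B' ^ m * (B' ^ m)⁻¹ := by field_simp
          _ ≤ (2 ^ (m / 2) * B ^ m * U ^ m) * (B' ^ m)⁻¹ := by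
              exact mul_le_mul_of_nonneg_right key (by positivity)
          _ = 2 ^ (m / 2) * (B' ^ m)⁻¹ * U ^ m * B ^ m := by
              field_simp
      have e1 : B ^ γ = (B ^ m)⁻¹ := by
        rw [hm, Real.rpow_neg hB0.le, inv_inv]
      have e2 : B' ^ γ = (B' ^ m)⁻¹ := by
        rw [hm, Real.rpow_neg hB'0.le, inv_inv]
      rw [habs, e1, e2]
      exact hgoal
  -- assemble
  have hUabs : U ^ |γ| ≤ S ^ |γ| := Real.rpow_le_rpow hU0 hUS (abs_nonneg γ)
  have hS44 : S ^ (4 * s) * S ^ |γ| = S ^ (4 * s + |γ|) := (Real.rpow_add hS0 _ _).symm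
  have hAnn : 0 ≤ A ^ s := Real.rpow_nonneg (by linarith) s
  have hBγnn : 0 ≤ B ^ γ := Real.rpow_nonneg hB0.le γ
  calc B ^ γ * A ^ s
      ≤ (2 ^ (|γ| / 2) * B' ^ γ * U ^ |γ|) * (16 ^ s * A' ^ s * S ^ (4 * s)) := by
        apply mul_le_mul hBγ hAs hAnn
        positivity
    _ ≤ (2 ^ (|γ| / 2) * B' ^ γ * S ^ |γ|) * (16 ^ s * A' ^ s * S ^ (4 * s)) := by
        apply mul_le_mul_of_nonneg_right _ (by positivity)
        exact mul_le_mul_of_nonneg_left hUabs (by positivity)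
    _ = 2 ^ (|γ| / 2) * 16 ^ s * (B' ^ γ * A' ^ s) * (S ^ (4 * s) * S ^ |γ|) := by ring
    _ = 2 ^ (|γ| / 2) * 16 ^ s * (B' ^ γ * A' ^ s) * S ^ (4 * s + |γ|) := by rw [hS44]
end

section
/- Let s ∈ (0,1) and γ ∈ ℝ with 1 + γ + 2s > −1. There exists a constant C such that for all v ∈ ℝ³ with |v| ≥ 1, ∫_{|v|/2}^{|v|} (1 + |v|² − t²)^{(1+γ+2s)/2} ⟨t⟩^{−(1+2s)} dt ≤ C ⟨v⟩^{1+γ}. -/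
open MeasureTheory

set_option maxHeartbeats 2000000 in
/-- For `s ∈ (0,1)` and `γ` with `1+γ+2s > -1`, there exists `C` with
`∫_{|v|/2}^{|v|} (1+|v|²-t²)^{(1+γ+2s)/2} ⟨t⟩^{-(1+2s)} dt ≤ C ⟨v⟩^{1+γ}` for `|v| ≥ 1`. -/
theorem weight_integral_upper (s γ : ℝ) (hs : 0 < s) (hs1 : s < 1)
    (hγ : 1 + γ + 2 * s > -1) :
    ∃ C : ℝ, ∀ v : EuclideanSpace ℝ (Fin 3), 1 ≤ ‖v‖ →
      (∫ t in Set.Icc (‖v‖ / 2) ‖v‖,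
          (1 + ‖v‖ ^ 2 - t ^ 2) ^ ((1 + γ + 2 * s) / 2) *
            Real.sqrt (1 + t ^ 2) ^ (-(1 + 2 * s))) ≤
        C * Real.sqrt (1 + ‖v‖ ^ 2) ^ (1 + γ) := by
  set q : ℝ := (1 + γ + 2 * s) / 2 with hqdef
  have hq1 : 0 < q + 1 := by rw [hqdef]; linarith
  refine ⟨2 ^ (|q| + 2 + 3 * s) / (q + 1), fun v hr => ?_⟩
  set r : ℝ := ‖v‖ with hrdef
  have hr0 : (0:ℝ) < r := lt_of_lt_of_le one_pos hr
  have hhalf : r / 2 ≤ r := by linarith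
  have h1r : (0:ℝ) < 1 + r ^ 2 := by positivity
  set K : ℝ := 2 ^ |q| * (r / 2) ^ (-(1 + 2 * s)) with hKdef
  have hK0 : 0 ≤ K := by rw [hKdef]; positivity
  -- pointwise bound
  have hbound : ∀ t ∈ Set.Icc (r / 2) r,
      (1 + r ^ 2 - t ^ 2) ^ q * Real.sqrt (1 + t ^ 2) ^ (-(1 + 2 * s)) ≤
        K * (1 + r * (r - t)) ^ q := by
    intro t ht
    obtain ⟨ht1, ht2⟩ := ht
    have ht0 : (0:ℝ) < t := by linarith
    have hb1 : (0:ℝ) < 1 + r * (r - t) := by nlinarith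
    have hbase0 : (0:ℝ) < 1 + r ^ 2 - t ^ 2 := by nlinarith
    have hA : (1 + r ^ 2 - t ^ 2) ^ q ≤ 2 ^ |q| * (1 + r * (r - t)) ^ q := by
      rcases le_or_gt 0 q with hq0 | hq0
      · rw [abs_of_nonneg hq0]
        calc (1 + r ^ 2 - t ^ 2) ^ q ≤ (2 * (1 + r * (r - t))) ^ q :=
              Real.rpow_le_rpow hbase0.le (by nlinarith) hq0
          _ = 2 ^ q * (1 + r * (r - t)) ^ q := Real.mul_rpow (by norm_num) hb1.le
      · have h1 : (1 + r ^ 2 - t ^ 2) ^ q ≤ (1 + r * (r - t)) ^ q :=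
          Real.rpow_le_rpow_of_nonpos hb1 (by nlinarith) hq0.le
        have h2 : (1:ℝ) ≤ 2 ^ |q| := Real.one_le_rpow one_le_two (abs_nonneg q)
        nlinarith [Real.rpow_nonneg hb1.le q]
    have hB : Real.sqrt (1 + t ^ 2) ^ (-(1 + 2 * s)) ≤ (r / 2) ^ (-(1 + 2 * s)) := by
      apply Real.rpow_le_rpow_of_nonpos (by linarith)
      · calc r / 2 ≤ t := ht1
          _ ≤ Real.sqrt (1 + t ^ 2) := by
            rw [show t = Real.sqrt (t ^ 2) from (Real.sqrt_sq ht0.le).symm]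
            exact Real.sqrt_le_sqrt (by nlinarith [Real.sq_sqrt (show (0:ℝ) ≤ t ^ 2 by positivity)])
      · linarith
    calc (1 + r ^ 2 - t ^ 2) ^ q * Real.sqrt (1 + t ^ 2) ^ (-(1 + 2 * s))
        ≤ (2 ^ |q| * (1 + r * (r - t)) ^ q) * ((r / 2) ^ (-(1 + 2 * s))) := by
          apply mul_le_mul hA hB (Real.rpow_nonneg (Real.sqrt_nonneg _) _)
          positivity
      _ = K * (1 + r * (r - t)) ^ q := by rw [hKdef]; ring
  -- continuity / integrability
  have hcont1 : ContinuousOn (fun t : ℝ => (1 + r ^ 2 - t ^ 2) ^ q *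
      Real.sqrt (1 + t ^ 2) ^ (-(1 + 2 * s))) (Set.Icc (r / 2) r) := by
    apply ContinuousOn.mul
    · apply ContinuousOn.rpow_const (continuous_const.sub (continuous_pow 2)).continuousOn
      intro t ht
      exact Or.inl (ne_of_gt (show (0:ℝ) < 1 + r ^ 2 - t ^ 2 by nlinarith [ht.1, ht.2]))
    · apply ContinuousOn.rpow_const
        ((continuous_const.add (continuous_pow 2)).sqrt).continuousOn
      intro t _
      exact Or.inl (ne_of_gt (show (0:ℝ) < Real.sqrt (1 + t ^ 2) by positivity))
  have hcont2 : ContinuousOn (fun t : ℝ => (1 + r * (r - t)) ^ q) (Set.Icc (r / 2) r) := by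
    apply ContinuousOn.rpow_const
      (continuous_const.add (continuous_const.mul (continuous_const.sub continuous_id))).continuousOn
    intro t ht
    exact Or.inl (ne_of_gt (show (0:ℝ) < 1 + r * (r - t) by nlinarith [ht.1, ht.2]))
  have hmono : (∫ t in Set.Icc (r / 2) r,
      (1 + r ^ 2 - t ^ 2) ^ q * Real.sqrt (1 + t ^ 2) ^ (-(1 + 2 * s))) ≤
      ∫ t in Set.Icc (r / 2) r, K * (1 + r * (r - t)) ^ q :=
    setIntegral_mono_on hcont1.integrableOn_Icc
      ((hcont2.integrableOn_Icc).const_mul K) measurableSet_Icc hbound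
  -- FTC computation
  have hrq : r * (q + 1) ≠ 0 := by positivity
  have hFTC : (∫ t in Set.Icc (r / 2) r, (1 + r * (r - t)) ^ q) =
      ((1 + r ^ 2 / 2) ^ (q + 1) - 1) / (r * (q + 1)) := by
    have hderiv : ∀ t ∈ Set.uIcc (r / 2) r,
        HasDerivAt (fun t : ℝ => -(1 + r * (r - t)) ^ (q + 1) / (r * (q + 1)))
          ((1 + r * (r - t)) ^ q) t := by
      intro t ht
      rw [Set.uIcc_of_le hhalf] at ht
      have hb : (0:ℝ) < 1 + r * (r - t) := by nlinarith [ht.1, ht.2]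
      have hd : HasDerivAt (fun t : ℝ => 1 + r * (r - t)) (-r) t := by
        have h0 : HasDerivAt (fun t : ℝ => r - t) (-1) t := (hasDerivAt_id t).const_sub r
        simpa using (h0.const_mul r).const_add 1
      have := ((hd.rpow_const (p := q + 1) (Or.inl hb.ne')).neg).div_const (r * (q + 1))
      refine this.congr_deriv ?_
      rw [add_sub_cancel_right]
      field_simp
    have hint : IntervalIntegrable (fun t : ℝ => (1 + r * (r - t)) ^ q)
        volume (r / 2) r := by
      apply ContinuousOn.intervalIntegrable
      rw [Set.uIcc_of_le hhalf]
      exact hcont2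
    rw [MeasureTheory.integral_Icc_eq_integral_Ioc, ← intervalIntegral.integral_of_le hhalf,
      intervalIntegral.integral_eq_sub_of_hasDerivAt hderiv hint]
    rw [sub_self, mul_zero, add_zero, Real.one_rpow, sub_half]
    have : r * (r / 2) = r ^ 2 / 2 := by ring
    rw [this]
    field_simp
    ring
  have hconst : (∫ t in Set.Icc (r / 2) r, K * (1 + r * (r - t)) ^ q) =
      K * (((1 + r ^ 2 / 2) ^ (q + 1) - 1) / (r * (q + 1))) := by
    rw [MeasureTheory.integral_const_mul, hFTC]
  -- numerator comparison
  have hnum : ((1 + r ^ 2 / 2) ^ (q + 1) - 1) / (r * (q + 1)) ≤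
      (1 + r ^ 2) ^ (q + 1) / (r * (q + 1)) := by
    have h := Real.rpow_le_rpow (by positivity : (0:ℝ) ≤ 1 + r ^ 2 / 2)
      (by nlinarith : (1 + r ^ 2 / 2 : ℝ) ≤ 1 + r ^ 2) hq1.le
    have hc : (0:ℝ) < r * (q + 1) := by positivity
    exact (div_le_div_iff_of_pos_right hc).mpr (by linarith)
  -- rewriting the constant factor
  have ha : ((r / 2 : ℝ)) ^ (-(1 + 2 * s)) = 2 ^ (1 + 2 * s) * r ^ (-(1 + 2 * s)) := by
    rw [Real.div_rpow hr0.le (by norm_num : (0:ℝ) ≤ 2),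
      Real.rpow_neg (by norm_num : (0:ℝ) ≤ 2), div_inv_eq_mul, mul_comm]
  -- the key power-counting estimate
  have hb2 : r ^ (-(1 + 2 * s)) * (1 + r ^ 2) ^ (q + 1) / r ≤
      2 ^ (1 + s) * (1 + r ^ 2) ^ (q - s) := by
    have e1 : r ^ (-(1 + 2 * s)) / r = r ^ (-(2 + 2 * s)) := by
      rw [div_eq_mul_inv, ← Real.rpow_neg_one r, ← Real.rpow_add hr0]
      congr 1
      ring
    have e2 : r ^ (-(2 + 2 * s)) = (r ^ 2) ^ (-(1 + s)) := by
      rw [← Real.rpow_natCast r 2, ← Real.rpow_mul hr0.le]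
      congr 1
      push_cast
      ring
    have e3 : ((r : ℝ) ^ 2) ^ (-(1 + s)) ≤ ((1 + r ^ 2) / 2) ^ (-(1 + s)) :=
      Real.rpow_le_rpow_of_nonpos (by nlinarith [sq_nonneg r] : (0:ℝ) < (1 + r ^ 2) / 2)
        (by nlinarith [sq_nonneg (r - 1), hr] : ((1 + r ^ 2) / 2 : ℝ) ≤ r ^ 2) (by linarith)
    have e4 : (((1 + r ^ 2) / 2 : ℝ)) ^ (-(1 + s)) =
        2 ^ (1 + s) * (1 + r ^ 2) ^ (-(1 + s)) := by
      rw [Real.div_rpow h1r.le (by norm_num : (0:ℝ) ≤ 2),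
        Real.rpow_neg (by norm_num : (0:ℝ) ≤ 2), div_inv_eq_mul, mul_comm]
    have e5 : (1 + r ^ 2 : ℝ) ^ (-(1 + s)) * (1 + r ^ 2) ^ (q + 1) =
        (1 + r ^ 2) ^ (q - s) := by
      rw [← Real.rpow_add h1r]
      congr 1
      ring
    calc r ^ (-(1 + 2 * s)) * (1 + r ^ 2) ^ (q + 1) / r
        = (r ^ (-(1 + 2 * s)) / r) * (1 + r ^ 2) ^ (q + 1) := by ring
      _ = (r ^ 2) ^ (-(1 + s)) * (1 + r ^ 2) ^ (q + 1) := by rw [e1, e2]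
      _ ≤ (2 ^ (1 + s) * (1 + r ^ 2) ^ (-(1 + s))) * (1 + r ^ 2) ^ (q + 1) := by
          rw [← e4]
          exact mul_le_mul_of_nonneg_right e3 (Real.rpow_nonneg h1r.le _)
      _ = 2 ^ (1 + s) * (1 + r ^ 2) ^ (q - s) := by rw [mul_assoc, e5]
  have h2split : (2:ℝ) ^ (|q| + 2 + 3 * s) = 2 ^ |q| * 2 ^ (1 + 2 * s) * 2 ^ (1 + s) := by
    rw [← Real.rpow_add two_pos, ← Real.rpow_add two_pos]
    congr 1
    ring
  have hrhs : Real.sqrt (1 + r ^ 2) ^ (1 + γ) = (1 + r ^ 2) ^ (q - s) := by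
    rw [Real.sqrt_eq_rpow, ← Real.rpow_mul h1r.le]
    congr 1
    rw [hqdef]
    ring
  calc (∫ t in Set.Icc (r / 2) r,
        (1 + r ^ 2 - t ^ 2) ^ q * Real.sqrt (1 + t ^ 2) ^ (-(1 + 2 * s)))
      ≤ K * (((1 + r ^ 2 / 2) ^ (q + 1) - 1) / (r * (q + 1))) :=
        le_of_le_of_eq hmono hconst
    _ ≤ K * ((1 + r ^ 2) ^ (q + 1) / (r * (q + 1))) :=
        mul_le_mul_of_nonneg_left hnum hK0
    _ = (2 ^ |q| * 2 ^ (1 + 2 * s) / (q + 1)) *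
        (r ^ (-(1 + 2 * s)) * (1 + r ^ 2) ^ (q + 1) / r) := by
        rw [hKdef, ha]
        field_simp
    _ ≤ (2 ^ |q| * 2 ^ (1 + 2 * s) / (q + 1)) *
        (2 ^ (1 + s) * (1 + r ^ 2) ^ (q - s)) := by
        apply mul_le_mul_of_nonneg_left hb2 (by positivity)
    _ = (2 ^ (|q| + 2 + 3 * s) / (q + 1)) * Real.sqrt (1 + r ^ 2) ^ (1 + γ) := by
        rw [hrhs, h2split]
        ring
end
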